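/- A finite dimensional G-graded algebra A is graded symmetric if and only if there exists a linear map λ : A → k such that λ(xy) = λ(yx) for all x,y ∈ A, Ker(λ) contains no nonzero graded left ideal of A, and λ(x_σ y_τ) = 0 for all homogeneous x_σ ∈ A_σ, y_τ ∈ A_τ with στ ≠ e. -/
import Mathlib


/-- The degree-`g` component of the dual of a graded module:
`(M*)_g = { f | f(M_h) = 0 for all h ≠ g⁻¹ }`. -/
def dualComponent {k M : Type*} [Field k] [AddCommGroup M] [Module k M]
    {G : Type*} [Group G] (ℳ : G → Submodule k M) (g : G) :
    Submodule k (Module.Dual k M) where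
  carrier := {f | ∀ h : G, h ≠ g⁻¹ → ∀ x ∈ ℳ h, f x = 0}
  zero_mem' := by intro h hh x hx; rfl
  add_mem' := by
    intro f₁ f₂ h₁ h₂ h hh x hx
    simp [h₁ h hh x hx, h₂ h hh x hx]
  smul_mem' := by
    intro c f hf h hh x hx
    simp [hf h hh x hx]

/-- `A` is graded symmetric: `A ≅ A*` as graded `(A,A)`-bimodules, where the left
action on `A*` is `(a • f) y = f (y * a)`, the right action is `(f • a) y = f (a * y)`,
and `(A*)_g = { f | f(A_h) = 0 for h ≠ g⁻¹ }`. -/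
def IsGradedSymmetric {k A : Type*} [Field k] [Ring A] [Algebra k A]
    {G : Type*} [Group G] (𝒜 : G → Submodule k A) : Prop :=
  ∃ φ : A ≃ₗ[k] Module.Dual k A,
    (∀ a x y : A, φ (a * x) y = φ x (y * a)) ∧
    (∀ a x y : A, φ (x * a) y = φ x (a * y)) ∧
    ∀ g : G, ∀ x ∈ 𝒜 g, φ x ∈ dualComponent 𝒜 g

/-- a finite dimensional `G`-graded algebra `A` is graded symmetric iff
there is a linear map `λ : A → k` with `λ(xy) = λ(yx)` for all `x, y`, whose kernel
contains no nonzero graded left ideal of `A`, and with `λ(x_σ y_τ) = 0` for all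
homogeneous `x_σ ∈ A_σ`, `y_τ ∈ A_τ` with `στ ≠ e`. -/
theorem gradedSymmetric_iff_trace
    {k A : Type*} [Field k] [Ring A] [Algebra k A] [FiniteDimensional k A]
    {G : Type*} [Group G] [DecidableEq G]
    (𝒜 : G → Submodule k A)
    (hinternal : DirectSum.IsInternal 𝒜)
    (hone : (1 : A) ∈ 𝒜 1)
    (hmul : ∀ {g h : G}, ∀ a ∈ 𝒜 g, ∀ b ∈ 𝒜 h, a * b ∈ 𝒜 (g * h)) :
    IsGradedSymmetric 𝒜 ↔
      ∃ lam : A →ₗ[k] k,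
        (∀ x y : A, lam (x * y) = lam (y * x)) ∧
        (∀ I : Submodule k A,
          (∀ a : A, ∀ x ∈ I, a * x ∈ I) →
          (I = ⨆ g : G, I ⊓ 𝒜 g) →
          I ≤ LinearMap.ker lam → I = ⊥) ∧
        (∀ σ τ : G, σ * τ ≠ 1 → ∀ x ∈ 𝒜 σ, ∀ y ∈ 𝒜 τ, lam (x * y) = 0) := by

  constructor
  · rintro ⟨φ, h1, h2, hgr⟩
    have hφ : ∀ x y : A, φ x y = φ 1 (x * y) := fun x y => by
      have := h2 x 1 y; rwa [one_mul] at this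
    have hφ' : ∀ x y : A, φ x y = φ 1 (y * x) := fun x y => by
      have := h1 x 1 y; rwa [mul_one] at this
    refine ⟨(φ 1 : Module.Dual k A), ?_, ?_, ?_⟩
    · intro x y
      rw [← hφ x y, hφ' x y]
    · intro I hI _ hIker
      rw [eq_bot_iff]
      intro x hx
      have hx0 : φ x = 0 := by
        ext y
        have : φ x y = φ 1 (y * x) := hφ' x y
        rw [this]
        exact hIker (hI y x hx)
      have : x = 0 := by
        have := φ.injective (by rw [hx0, map_zero] : φ x = φ 0)
        simpa using this
      simpa using this
    · intro σ τ hστ x hxσ y hyτ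
      rw [← hφ x y]
      refine hgr σ x hxσ τ (fun h => hστ ?_) y hyτ
      rw [h, mul_inv_cancel]
  · rintro ⟨lam, hcomm, hker, hdeg⟩
    classical
    letI : DirectSum.Decomposition 𝒜 := hinternal.chooseDecomposition
    set φ₀ : A →ₗ[k] Module.Dual k A :=
      (LinearMap.llcomp k A A k lam).comp (LinearMap.mul k A) with hφ₀def
    have hφ₀app : ∀ x y : A, φ₀ x y = lam (x * y) := fun x y => rfl
    have key : ∀ (x : A) (τ : G) (y : A), y ∈ 𝒜 τ →
        lam (x * y) = lam ((DirectSum.decompose 𝒜 x τ⁻¹ : A) * y) := by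
      intro x τ y hy
      conv_lhs => rw [← DirectSum.sum_support_decompose 𝒜 x]
      rw [Finset.sum_mul, map_sum]
      refine Finset.sum_eq_single τ⁻¹ ?_ ?_
      · intro g _ hne
        exact hdeg g τ (fun h => hne (eq_inv_of_mul_eq_one_left h)) _
          (SetLike.coe_mem _) y hy
      · intro h
        rw [DFinsupp.notMem_support_iff.mp h]
        simp
    have key2 : ∀ (x y : A) (g : G),
        lam ((DirectSum.decompose 𝒜 x g : A) * y)
          = lam (x * (DirectSum.decompose 𝒜 y g⁻¹ : A)) := by
      intro x y g
      rw [key x g⁻¹ _ (SetLike.coe_mem _), inv_inv]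
      conv_lhs => rw [← DirectSum.sum_support_decompose 𝒜 y]
      rw [Finset.mul_sum, map_sum]
      refine Finset.sum_eq_single g⁻¹ ?_ ?_
      · intro h _ hne
        exact hdeg g h (fun heq => hne (eq_inv_of_mul_eq_one_right heq)) _
          (SetLike.coe_mem _) _ (SetLike.coe_mem _)
      · intro h
        rw [DFinsupp.notMem_support_iff.mp h]
        simp
    have hKbot : LinearMap.ker φ₀ = ⊥ := by
      refine hker (LinearMap.ker φ₀) ?_ ?_ ?_
      · intro a x hx
        rw [LinearMap.mem_ker] at hx ⊢
        ext y
        have : lam (a * x * y) = lam (x * (y * a)) := by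
          rw [mul_assoc, hcomm a (x * y), mul_assoc]
        show lam (a * x * y) = 0
        rw [this]
        have := LinearMap.congr_fun hx (y * a)
        simpa [hφ₀app] using this
      · refine le_antisymm ?_ (iSup_le fun g => inf_le_left)
        intro x hx
        rw [← DirectSum.sum_support_decompose 𝒜 x]
        refine Submodule.sum_mem _ fun g _ => ?_
        refine Submodule.mem_iSup_of_mem g ⟨?_, SetLike.coe_mem _⟩
        simp only [SetLike.mem_coe, LinearMap.mem_ker]
        ext y
        show lam ((DirectSum.decompose 𝒜 x g : A) * y) = 0
        rw [key2]
        have := LinearMap.congr_fun (LinearMap.mem_ker.mp hx)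
          (DirectSum.decompose 𝒜 y g⁻¹ : A)
        simpa [hφ₀app] using this
      · intro x hx
        rw [LinearMap.mem_ker]
        have := LinearMap.congr_fun (LinearMap.mem_ker.mp hx) 1
        simpa [hφ₀app] using this
    have hinj : Function.Injective φ₀ := LinearMap.ker_eq_bot.mp hKbot
    have hrank : Module.finrank k A = Module.finrank k (Module.Dual k A) :=
      Subspace.dual_finrank_eq.symm
    refine ⟨φ₀.linearEquivOfInjective hinj hrank, ?_, ?_, ?_⟩
    · intro a x y
      rw [LinearMap.linearEquivOfInjective_apply, LinearMap.linearEquivOfInjective_apply]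
      show lam (a * x * y) = lam (x * (y * a))
      rw [mul_assoc, hcomm a (x * y), mul_assoc]
    · intro a x y
      rw [LinearMap.linearEquivOfInjective_apply, LinearMap.linearEquivOfInjective_apply]
      show lam (x * a * y) = lam (x * (a * y))
      rw [mul_assoc]
    · intro g x hx h hh z hz
      rw [LinearMap.linearEquivOfInjective_apply]
      exact hdeg g h (fun heq => hh (eq_inv_of_mul_eq_one_right heq)) x hx z hz
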